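/- For every real parameter 0 < a ≤ 1: the function F_a(s) attains its global minimum exactly at s = 1 (F_a is strictly decreasing on (−∞,1] and strictly increasing on [1,∞)), so the global minimizers of f_a(x,y) = F_a(xy) are exactly {(x,y) : xy = 1}; moreover F_a'(1) = 0 and F_a''(1) = 1, so at any point (x,y) with xy = 1 the Hessian of f_a equals the outer product (y,x)(y,x)ᵀ, whose largest eigenvalue is x² + y². -/

import Mathlib

/-- `F_a(s) = C_a (log(e^{s-1}+1) + log(e^{1-s}+1))^a` with
`C_a = 1/(a 2^{a-2} (log 2)^{a-1})`, for `0 < a ≤ 1`. -/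
noncomputable def Fa (a : ℝ) (s : ℝ) : ℝ :=
  (1 / (a * (2 : ℝ) ^ (a - 2) * Real.log 2 ^ (a - 1))) *
    (Real.log (Real.exp (s - 1) + 1) + Real.log (Real.exp (1 - s) + 1)) ^ a

/-- `f_a(x,y) = F_a(xy)`. -/
noncomputable def fa (a : ℝ) (x y : ℝ) : ℝ := Fa a (x * y)

/-- second partial derivative `∂²f/∂x²`. -/
noncomputable def fxx (a : ℝ) (x y : ℝ) : ℝ := deriv (fun t => deriv (fun u => fa a u y) t) x
/-- second partial derivative `∂²f/∂y∂x`. -/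
noncomputable def fxy (a : ℝ) (x y : ℝ) : ℝ := deriv (fun t => deriv (fun u => fa a u t) x) y
/-- second partial derivative `∂²f/∂x∂y`. -/
noncomputable def fyx (a : ℝ) (x y : ℝ) : ℝ := deriv (fun t => deriv (fun u => fa a t u) y) x
/-- second partial derivative `∂²f/∂y²`. -/
noncomputable def fyy (a : ℝ) (x y : ℝ) : ℝ := deriv (fun t => deriv (fun u => fa a x u) t) y

section Aux
open Real

noncomputable def GG (s : ℝ) : ℝ :=
  Real.log (Real.exp (s - 1) + 1) + Real.log (Real.exp (1 - s) + 1)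

noncomputable def GG1 (s : ℝ) : ℝ :=
  Real.exp (s - 1) / (Real.exp (s - 1) + 1) - Real.exp (1 - s) / (Real.exp (1 - s) + 1)

noncomputable def GG2 (s : ℝ) : ℝ :=
  Real.exp (s - 1) / (Real.exp (s - 1) + 1) ^ 2 + Real.exp (1 - s) / (Real.exp (1 - s) + 1) ^ 2

lemma eposne (t : ℝ) : Real.exp t + 1 ≠ 0 := by positivity

lemma hGG (s : ℝ) : HasDerivAt GG (GG1 s) s := by
  have h1 : HasDerivAt (fun u : ℝ => Real.exp (u - 1)) (Real.exp (s - 1) * 1) s :=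
    (((hasDerivAt_id s).sub_const 1)).exp
  have h2 : HasDerivAt (fun u : ℝ => Real.exp (1 - u)) (Real.exp (1 - s) * (0 - 1)) s :=
    ((hasDerivAt_const s (1:ℝ)).sub (hasDerivAt_id s)).exp
  have h3 := ((h1.add_const 1).log (eposne _)).add ((h2.add_const 1).log (eposne _))
  refine h3.congr_deriv ?_
  unfold GG1; ring

lemma hGG1 (s : ℝ) : HasDerivAt GG1 (GG2 s) s := by
  have h1 : HasDerivAt (fun u : ℝ => Real.exp (u - 1)) (Real.exp (s - 1) * 1) s :=
    (((hasDerivAt_id s).sub_const 1)).exp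
  have h2 : HasDerivAt (fun u : ℝ => Real.exp (1 - u)) (Real.exp (1 - s) * (0 - 1)) s :=
    ((hasDerivAt_const s (1:ℝ)).sub (hasDerivAt_id s)).exp
  have h3 := (h1.div (h1.add_const 1) (eposne _)).sub (h2.div (h2.add_const 1) (eposne _))
  refine h3.congr_deriv ?_
  unfold GG2
  field_simp
  ring

lemma GGpos (s : ℝ) : 0 < GG s := by
  have h1 : (0:ℝ) < Real.log (Real.exp (s - 1) + 1) :=
    Real.log_pos (by linarith [Real.exp_pos (s - 1)])
  have h2 : (0:ℝ) < Real.log (Real.exp (1 - s) + 1) :=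
    Real.log_pos (by linarith [Real.exp_pos (1 - s)])
  unfold GG; linarith

lemma GG_one : GG 1 = 2 * Real.log 2 := by
  unfold GG; norm_num; ring

lemma GG1_one : GG1 1 = 0 := by
  unfold GG1; norm_num

lemma GG2_one : GG2 1 = 1 / 2 := by
  unfold GG2; norm_num

lemma GG1_pos {s : ℝ} (hs : 1 < s) : 0 < GG1 s := by
  have h : Real.exp (1 - s) < Real.exp (s - 1) := Real.exp_lt_exp.2 (by linarith)
  have hA := Real.exp_pos (s - 1); have hB := Real.exp_pos (1 - s)
  unfold GG1
  rw [sub_pos, div_lt_div_iff₀ (by linarith) (by linarith)]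
  nlinarith

lemma GG1_neg {s : ℝ} (hs : s < 1) : GG1 s < 0 := by
  have h : Real.exp (s - 1) < Real.exp (1 - s) := Real.exp_lt_exp.2 (by linarith)
  have hA := Real.exp_pos (s - 1); have hB := Real.exp_pos (1 - s)
  unfold GG1
  rw [sub_neg, div_lt_div_iff₀ (by linarith) (by linarith)]
  nlinarith

lemma GG_cont : Continuous GG := by
  have : Differentiable ℝ GG := fun s => (hGG s).differentiableAt
  exact this.continuous

lemma GG_mono : StrictMonoOn GG (Set.Ici 1) := by
  apply strictMonoOn_of_deriv_pos (convex_Ici 1) GG_cont.continuousOn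
  intro s hs
  rw [interior_Ici] at hs
  rw [(hGG s).deriv]
  exact GG1_pos hs

lemma GG_anti : StrictAntiOn GG (Set.Iic 1) := by
  apply strictAntiOn_of_deriv_neg (convex_Iic 1) GG_cont.continuousOn
  intro s hs
  rw [interior_Iic] at hs
  rw [(hGG s).deriv]
  exact GG1_neg hs

noncomputable def Ca (a : ℝ) : ℝ := 1 / (a * (2 : ℝ) ^ (a - 2) * Real.log 2 ^ (a - 1))

lemma Ca_pos {a : ℝ} (ha0 : 0 < a) : 0 < Ca a := by
  have h2 : (0:ℝ) < (2:ℝ) ^ (a - 2) := Real.rpow_pos_of_pos (by norm_num) _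
  have hl : (0:ℝ) < Real.log 2 := Real.log_pos (by norm_num)
  have h3 : (0:ℝ) < Real.log 2 ^ (a - 1) := Real.rpow_pos_of_pos hl _
  unfold Ca; positivity

lemma Fa_eq (a s : ℝ) : Fa a s = Ca a * GG s ^ a := rfl

noncomputable def Fd (a s : ℝ) : ℝ := Ca a * (GG1 s * a * GG s ^ (a - 1))

lemma hFa (a : ℝ) (s : ℝ) : HasDerivAt (Fa a) (Fd a s) s := by
  have h := ((hGG s).rpow_const (p := a) (Or.inl (GGpos s).ne')).const_mul (Ca a)
  exact h

lemma deriv_Fa (a : ℝ) : deriv (Fa a) = Fd a := funext fun s => (hFa a s).deriv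

lemma Fd_one (a : ℝ) : Fd a 1 = 0 := by
  unfold Fd; rw [GG1_one]; ring

noncomputable def Fdd (a s : ℝ) : ℝ :=
  Ca a * (GG2 s * a * GG s ^ (a - 1) + GG1 s * a * (GG1 s * (a - 1) * GG s ^ (a - 2)))

lemma hFd (a : ℝ) (s : ℝ) : HasDerivAt (Fd a) (Fdd a s) s := by
  have hu : HasDerivAt (fun t => GG1 t * a) (GG2 s * a) s := (hGG1 s).mul_const a
  have hv : HasDerivAt (fun t => GG t ^ (a - 1)) (GG1 s * (a - 1) * GG s ^ (a - 1 - 1)) s :=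
    (hGG s).rpow_const (Or.inl (GGpos s).ne')
  have h := (hu.mul hv).const_mul (Ca a)
  refine h.congr_deriv ?_
  unfold Fdd
  rw [show a - 1 - 1 = a - 2 by ring]


lemma Fdd_one {a : ℝ} (ha0 : 0 < a) : Fdd a 1 = 1 := by
  have hl : (0:ℝ) < Real.log 2 := Real.log_pos (by norm_num)
  unfold Fdd Ca
  rw [GG1_one, GG2_one, GG_one]
  rw [Real.mul_rpow (by norm_num) hl.le]
  have h2 : (2:ℝ) ^ (a - 1) = 2 * (2:ℝ) ^ (a - 2) := by
    rw [show a - 1 = 1 + (a - 2) by ring, Real.rpow_add (by norm_num), Real.rpow_one]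
  rw [h2]
  have hA : ((2:ℝ) ^ (a - 2)) ≠ 0 := (Real.rpow_pos_of_pos (by norm_num) _).ne'
  have hB : (Real.log 2 ^ (a - 1)) ≠ 0 := (Real.rpow_pos_of_pos hl _).ne'
  field_simp
  ring

lemma Fa_lt {a : ℝ} (ha0 : 0 < a) {s t : ℝ} (h : GG s < GG t) : Fa a s < Fa a t := by
  rw [Fa_eq, Fa_eq]
  exact mul_lt_mul_of_pos_left (Real.rpow_lt_rpow (GGpos s).le h ha0) (Ca_pos ha0)

lemma Fa_anti {a : ℝ} (ha0 : 0 < a) : StrictAntiOn (Fa a) (Set.Iic 1) :=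
  fun x hx y hy hxy => Fa_lt ha0 (GG_anti hx hy hxy)

lemma Fa_mono {a : ℝ} (ha0 : 0 < a) : StrictMonoOn (Fa a) (Set.Ici 1) :=
  fun x hx y hy hxy => Fa_lt ha0 (GG_mono hx hy hxy)

lemma Fa_min {a : ℝ} (ha0 : 0 < a) (s : ℝ) : Fa a 1 ≤ Fa a s := by
  rcases lt_trichotomy s 1 with h | h | h
  · exact (Fa_anti ha0 h.le Set.self_mem_Iic h).le
  · rw [h]
  · exact (Fa_mono ha0 Set.self_mem_Ici h.le h).le

lemma Fa_min_strict {a : ℝ} (ha0 : 0 < a) {s : ℝ} (hs : s ≠ 1) : Fa a 1 < Fa a s := by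
  rcases lt_or_gt_of_ne hs with h | h
  · exact Fa_anti ha0 h.le Set.self_mem_Iic h
  · exact Fa_mono ha0 Set.self_mem_Ici h.le h

lemma deriv_fa_x (a y : ℝ) (t : ℝ) : deriv (fun u => fa a u y) t = Fd a (t * y) * y := by
  have h : HasDerivAt (fun u => fa a u y) (Fd a (t * y) * y) t := by
    have := (hFa a (t * y)).comp t (hasDerivAt_mul_const (c := y) (x := t))
    exact this
  exact h.deriv

lemma deriv_fa_y (a x : ℝ) (t : ℝ) : deriv (fun u => fa a x u) t = Fd a (x * t) * x := by
  have h : HasDerivAt (fun u => fa a x u) (Fd a (x * t) * x) t := by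
    have h0 : HasDerivAt (fun u : ℝ => x * u) x t := by
      simpa using (hasDerivAt_id t).const_mul x
    have := (hFa a (x * t)).comp t h0
    exact this
  exact h.deriv

lemma hmulc (x y : ℝ) : HasDerivAt (fun t : ℝ => t * y) y x := hasDerivAt_mul_const y
lemma hcmul (x y : ℝ) : HasDerivAt (fun t : ℝ => x * t) x y := by
  simpa using (hasDerivAt_id y).const_mul x

lemma fxx_eq {a : ℝ} (ha0 : 0 < a) {x y : ℝ} (hxy : x * y = 1) : fxx a x y = y ^ 2 := by
  unfold fxx
  have he : (fun t => deriv (fun u => fa a u y) t) = fun t => Fd a (t * y) * y :=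
    funext fun t => deriv_fa_x a y t
  rw [he]
  have h : HasDerivAt (fun t => Fd a (t * y) * y) (Fdd a (x * y) * y * y) x :=
    by have := ((hFd a (x * y)).comp x (hmulc x y)).mul_const y; exact this
  rw [h.deriv, hxy, Fdd_one ha0]; ring

lemma fxy_eq {a : ℝ} (ha0 : 0 < a) {x y : ℝ} (hxy : x * y = 1) : fxy a x y = 1 := by
  unfold fxy
  have he : (fun t => deriv (fun u => fa a u t) x) = fun t => Fd a (x * t) * t := by
    funext t
    exact deriv_fa_x a t x
  rw [he]
  have h : HasDerivAt (fun t => Fd a (x * t) * t)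
      (Fdd a (x * y) * x * y + Fd a (x * y) * 1) y :=
    ((hFd a (x * y)).comp y (hcmul x y)).mul (hasDerivAt_id y)
  rw [h.deriv, hxy, Fdd_one ha0, Fd_one]; linear_combination hxy

lemma fyx_eq {a : ℝ} (ha0 : 0 < a) {x y : ℝ} (hxy : x * y = 1) : fyx a x y = 1 := by
  unfold fyx
  have he : (fun t => deriv (fun u => fa a t u) y) = fun t => Fd a (t * y) * t := by
    funext t
    exact deriv_fa_y a t y
  rw [he]
  have h : HasDerivAt (fun t => Fd a (t * y) * t)
      (Fdd a (x * y) * y * x + Fd a (x * y) * 1) x :=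
    by have := ((hFd a (x * y)).comp x (hmulc x y)).mul (hasDerivAt_id x); exact this
  rw [h.deriv, hxy, Fdd_one ha0, Fd_one]; linear_combination hxy

lemma fyy_eq {a : ℝ} (ha0 : 0 < a) {x y : ℝ} (hxy : x * y = 1) : fyy a x y = x ^ 2 := by
  unfold fyy
  have he : (fun t => deriv (fun u => fa a x u) t) = fun t => Fd a (x * t) * x :=
    funext fun t => deriv_fa_y a x t
  rw [he]
  have h : HasDerivAt (fun t => Fd a (x * t) * x) (Fdd a (x * y) * x * x) y :=
    ((hFd a (x * y)).comp y (hcmul x y)).mul_const x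
  rw [h.deriv, hxy, Fdd_one ha0]; ring

end Aux

theorem stmt_2 (a : ℝ) (ha0 : 0 < a) (ha1 : a ≤ 1) :
    StrictAntiOn (Fa a) (Set.Iic 1) ∧ StrictMonoOn (Fa a) (Set.Ici 1) ∧
    {p : ℝ × ℝ | ∀ q : ℝ × ℝ, fa a p.1 p.2 ≤ fa a q.1 q.2} = {p : ℝ × ℝ | p.1 * p.2 = 1} ∧
    deriv (Fa a) 1 = 0 ∧ deriv (deriv (Fa a)) 1 = 1 ∧
    (∀ x y : ℝ, x * y = 1 →
      fxx a x y = y ^ 2 ∧ fxy a x y = 1 ∧ fyx a x y = 1 ∧ fyy a x y = x ^ 2 ∧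
      Matrix.det (!![y ^ 2, 1; 1, x ^ 2] -
        (x ^ 2 + y ^ 2) • (1 : Matrix (Fin 2) (Fin 2) ℝ)) = 0 ∧
      (∀ μ : ℝ,
        Matrix.det (!![y ^ 2, 1; 1, x ^ 2] - μ • (1 : Matrix (Fin 2) (Fin 2) ℝ)) = 0 →
          μ ≤ x ^ 2 + y ^ 2)) := by
  refine ⟨Fa_anti ha0, Fa_mono ha0, ?_, ?_, ?_, ?_⟩
  · ext ⟨x, y⟩
    simp only [Set.mem_setOf_eq]
    constructor
    · intro h
      by_contra hne
      have h1 := h (1, 1)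
      simp only [fa] at h1
      norm_num at h1
      exact absurd h1 (not_le.2 (Fa_min_strict ha0 hne))
    · intro hxy q
      simp only [fa, hxy]
      exact Fa_min ha0 _
  · rw [deriv_Fa, Fd_one]
  · rw [deriv_Fa]
    rw [(hFd a 1).deriv]
    exact Fdd_one ha0
  · intro x y hxy
    refine ⟨fxx_eq ha0 hxy, fxy_eq ha0 hxy, fyx_eq ha0 hxy, fyy_eq ha0 hxy, ?_, ?_⟩
    · simp [Matrix.det_fin_two, Matrix.smul_apply, Matrix.one_apply]
      nlinarith [hxy]
    · intro μ hμ
      simp [Matrix.det_fin_two, Matrix.smul_apply, Matrix.one_apply] at hμ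
      by_contra h'
      push_neg at h'
      have h2 : (0:ℝ) < x ^ 2 + y ^ 2 := by nlinarith
      nlinarith
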